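/- int_Reg(Vertex Cover) is decidable: there is an algorithm (a computable function on finite encodings of NFAs) that, given an arbitrary NFA M over the alphabet Σ = {▷, 1, a, #, $}, decides whether there exists a word w ∈ L(M) ∩ Enc such that decode(w) is a positive Vertex Cover instance. -/

import Mathlib

/-- The fixed five-letter alphabet Σ = {▷, 1, a, #, $}. -/
inductive Letter : Type
  | tri    -- ▷
  | one    -- 1
  | lett   -- a
  | hash   -- #
  | dollar -- $
deriving DecidableEq

/-- Words over the alphabet Σ. -/
abbrev Word := List Letter

/-- The threshold token `▷1^k$`. -/
def thresholdTok (k : ℕ) : Word := Letter.tri :: (List.replicate k Letter.one ++ [Letter.dollar])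

/-- The left vertex token `▷a^p#`. -/
def leftTok (p : ℕ) : Word := Letter.tri :: (List.replicate p Letter.lett ++ [Letter.hash])

/-- The right vertex token `▷a^q$`. -/
def rightTok (q : ℕ) : Word := Letter.tri :: (List.replicate q Letter.lett ++ [Letter.dollar])

/-- The encoding `▷1^k$ ∏_i (▷a^{p_i}# ▷a^{q_i}$)` of a threshold `k` together with a
list of (encoded) edges. -/
def encode (k : ℕ) (es : List (ℕ × ℕ)) : Word :=
  thresholdTok k ++ (es.map (fun e => leftTok e.1 ++ rightTok e.2)).flatten

/-- The regular language `Enc = ▷1*$(▷a*#▷a*$)*` of all encodings. -/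
def Enc : Set Word := { w | ∃ (k : ℕ) (es : List (ℕ × ℕ)), w = encode k es }

/-- A token: a threshold token, a left vertex token, or a right vertex token. -/
def IsToken (w : Word) : Prop :=
  (∃ k, w = thresholdTok k) ∨ (∃ p, w = leftTok p) ∨ (∃ q, w = rightTok q)

/-- A representative function is token-preserving if all representatives are tokens. -/
def TokenPreserving {Q : Type} (rep : Q → Q → Set Word) : Prop :=
  ∀ p q : Q, ∀ w ∈ rep p q, IsToken w

/-- A finite simple undirected graph with vertices named by natural numbers:
a finite vertex set and a finite set of undirected edges. -/
structure EncGraph where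
  V : Finset ℕ
  E : Finset (Sym2 ℕ)

/-- `G` has a vertex cover of size at most `k`. -/
def HasVC (G : EncGraph) (k : ℕ) : Prop :=
  ∃ S : Finset ℕ, S ⊆ G.V ∧ S.card ≤ k ∧ ∀ e ∈ G.E, ∃ a ∈ S, a ∈ e

/-- `G` has an independent set of size at least `k`. -/
def HasIS (G : EncGraph) (k : ℕ) : Prop :=
  ∃ S : Finset ℕ, S ⊆ G.V ∧ k ≤ S.card ∧ ∀ a ∈ S, ∀ b ∈ S, s(a, b) ∉ G.E

/-- The graph described by a list of (encoded) edges: vertices are all the numbers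
occurring, edges are the non-loop pairs. -/
def graphOf (es : List (ℕ × ℕ)) : EncGraph where
  V := (es.map Prod.fst).toFinset ∪ (es.map Prod.snd).toFinset
  E := ((es.filter (fun e => e.1 ≠ e.2)).map (fun e => s(e.1, e.2))).toFinset

/-- `decode(w) = (G, k)` : the word `w ∈ Enc` encodes the graph `G` and threshold `k`. -/
def decodesTo (w : Word) (G : EncGraph) (k : ℕ) : Prop :=
  ∃ es : List (ℕ × ℕ), w = encode k es ∧ G = graphOf es

def letterEquiv : Letter ≃ Fin 5 where
  toFun s :=
    match s with
    | Letter.tri => 0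
    | Letter.one => 1
    | Letter.lett => 2
    | Letter.hash => 3
    | Letter.dollar => 4
  invFun n :=
    if n = 0 then Letter.tri
    else if n = 1 then Letter.one
    else if n = 2 then Letter.lett
    else if n = 3 then Letter.hash
    else Letter.dollar
  left_inv s := by cases s <;> rfl
  right_inv n := by fin_cases n <;> rfl

instance : Primcodable Letter := Primcodable.ofEquiv (Fin 5) letterEquiv

/-- A finite encoding of an NFA over `Letter` with states named by natural numbers:
a list of transition triples, an initial state, and a list of final states. -/
abbrev NFAEnc : Type := List (ℕ × Letter × ℕ) × ℕ × List ℕ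

/-- One transition step of an encoded NFA on a set of states. -/
def encStep (T : List (ℕ × Letter × ℕ)) (S : Set ℕ) (x : Letter) : Set ℕ :=
  { q' | ∃ q ∈ S, (q, x, q') ∈ T }

/-- The language accepted by an encoded NFA. -/
def encLang (M : NFAEnc) : Set Word :=
  { w | ∃ qf ∈ M.2.2, qf ∈ w.foldl (encStep M.1) {M.2.1} }
/-! ### Auxiliary development -/

open Letter in
/-- Path predicate for the transition list `T`. -/
def Steps (T : List (ℕ × Letter × ℕ)) : Word → ℕ → ℕ → Prop
  | [], q, q' => q = q'
  | c :: w, q, q' => ∃ r, (q, c, r) ∈ T ∧ Steps T w r q'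

@[simp] lemma steps_nil {T : List (ℕ × Letter × ℕ)} {q q' : ℕ} :
    Steps T [] q q' ↔ q = q' := Iff.rfl

@[simp] lemma steps_cons {T : List (ℕ × Letter × ℕ)} {c : Letter} {w : Word} {q q' : ℕ} :
    Steps T (c :: w) q q' ↔ ∃ r, (q, c, r) ∈ T ∧ Steps T w r q' := Iff.rfl

lemma steps_append {T : List (ℕ × Letter × ℕ)} {u v : Word} {q q'' : ℕ} :
    Steps T (u ++ v) q q'' ↔ ∃ r, Steps T u q r ∧ Steps T v r q'' := by
  induction u generalizing q with
  | nil => simp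
  | cons c u ih =>
      simp only [List.cons_append, steps_cons, ih]
      constructor
      · rintro ⟨r, hr, s, h1, h2⟩; exact ⟨s, ⟨r, hr, h1⟩, h2⟩
      · rintro ⟨s, ⟨r, hr, h1⟩, h2⟩; exact ⟨r, hr, s, h1, h2⟩

@[simp] lemma steps_singleton {T : List (ℕ × Letter × ℕ)} {c : Letter} {q q' : ℕ} :
    Steps T [c] q q' ↔ (q, c, q') ∈ T := by
  simp [Steps]

/-- The set of targets of transitions. -/
def targets (T : List (ℕ × Letter × ℕ)) : Finset ℕ := (T.map (fun tr => tr.2.2)).toFinset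

lemma steps_mem_targets {T : List (ℕ × Letter × ℕ)} {w : Word} {q q' : ℕ}
    (h : Steps T w q q') (hw : w ≠ []) : q' ∈ targets T := by
  induction w generalizing q with
  | nil => exact absurd rfl hw
  | cons c w ih =>
      obtain ⟨r, hr, h2⟩ := h
      rcases eq_or_ne w [] with rfl | hne
      · cases h2
        exact List.mem_toFinset.2 (List.mem_map.2 ⟨(q, c, q'), hr, rfl⟩)
      · exact ih h2 hne

/-- Run functions over a constant word. -/
def IsRun (T : List (ℕ × Letter × ℕ)) (ρ : ℕ → ℕ) (c : Letter) (v : ℕ) : Prop :=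
  ∀ t < v, (ρ t, c, ρ (t + 1)) ∈ T

lemma steps_replicate_iff {T : List (ℕ × Letter × ℕ)} {c : Letter} {v : ℕ} {q q' : ℕ} :
    Steps T (List.replicate v c) q q' ↔
      ∃ ρ : ℕ → ℕ, ρ 0 = q ∧ ρ v = q' ∧ IsRun T ρ c v := by
  induction v generalizing q with
  | zero =>
      simp only [List.replicate, steps_nil]
      constructor
      · rintro rfl; exact ⟨fun _ => q, rfl, rfl, fun t ht => absurd ht (Nat.not_lt_zero t)⟩
      · rintro ⟨ρ, h0, hv, _⟩; rw [← h0, hv]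
  | succ v ih =>
      rw [List.replicate_succ]
      simp only [steps_cons, ih]
      constructor
      · rintro ⟨r, hr, ρ, h0, hv, hrun⟩
        refine ⟨fun t => if t = 0 then q else ρ (t - 1), by simp, by simp [hv], ?_⟩
        intro t ht
        cases t with
        | zero => simpa [h0] using hr
        | succ t => simpa using hrun t (Nat.lt_of_succ_lt_succ ht)
      · rintro ⟨ρ, h0, hv, hrun⟩
        refine ⟨ρ 1, by simpa [h0] using hrun 0 (Nat.succ_pos v), fun t => ρ (t + 1), rfl, ?_, ?_⟩
        · simpa using hv
        · intro t ht
          simpa using hrun (t + 1) (Nat.succ_lt_succ ht)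

lemma run_mem_targets {T : List (ℕ × Letter × ℕ)} {ρ : ℕ → ℕ} {c : Letter} {v : ℕ}
    (h : IsRun T ρ c v) (h0 : ρ 0 ∈ targets T) : ∀ t ≤ v, ρ t ∈ targets T := by
  intro t ht
  induction t with
  | zero => exact h0
  | succ t ih =>
      exact List.mem_toFinset.2 (List.mem_map.2
        ⟨(ρ t, c, ρ (t + 1)), h t (Nat.lt_of_succ_le ht), rfl⟩)

lemma run_cut {T : List (ℕ × Letter × ℕ)} {ρ : ℕ → ℕ} {c : Letter} {v t t' : ℕ}
    (hrun : IsRun T ρ c v) (htt : t < t') (ht'v : t' ≤ v) (heq : ρ t = ρ t') :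
    Steps T (List.replicate (v - (t' - t)) c) (ρ 0) (ρ v) := by
  rw [steps_replicate_iff]
  set δ := t' - t with hδ
  have hδpos : 0 < δ := Nat.sub_pos_of_lt htt
  refine ⟨fun u => if u ≤ t then ρ u else ρ (u + δ), by simp, ?_, ?_⟩
  · simp only []
    by_cases h : v - δ ≤ t
    · rw [if_pos h, show v - δ = t from by omega, heq, show t' = v from by omega]
    · rw [if_neg h, show v - δ + δ = v from by omega]
  · intro u hu
    simp only []
    by_cases h1 : u + 1 ≤ t
    · simp only [if_pos (Nat.le_of_succ_le h1), if_pos h1]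
      exact hrun u (by omega)
    · by_cases h3 : u ≤ t
      · simp only [if_pos h3, if_neg h1]
        rw [show u = t from by omega, heq, show t' = t + δ from by omega,
          show t + 1 + δ = t + δ + 1 from by omega]
        exact hrun (t + δ) (by omega)
      · simp only [if_neg h3, if_neg h1]
        rw [show u + 1 + δ = u + δ + 1 from by omega]
        exact hrun (u + δ) (by omega)
/-- Edge token. -/
def etok (e : ℕ × ℕ) : Word := leftTok e.1 ++ rightTok e.2

lemma encode_eq (k : ℕ) (es : List (ℕ × ℕ)) :
    encode k es = thresholdTok k ++ (es.map etok).flatten := rfl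

/-- Steps along a sequence of edge tokens. -/
def ESteps (T : List (ℕ × Letter × ℕ)) (es : List (ℕ × ℕ)) (q q' : ℕ) : Prop :=
  Steps T ((es.map etok).flatten) q q'

@[simp] lemma esteps_nil {T q q'} : ESteps T [] q q' ↔ q = q' := Iff.rfl

lemma esteps_cons {T e es q q'} :
    ESteps T (e :: es) q q' ↔ ∃ r, Steps T (etok e) q r ∧ ESteps T es r q' := by
  simp only [ESteps, List.map_cons, List.flatten_cons, steps_append]

lemma thr_iff {T : List (ℕ × Letter × ℕ)} {k q q'} :
    Steps T (thresholdTok k) q q' ↔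
      ∃ s1 s2, (q, Letter.tri, s1) ∈ T ∧ Steps T (List.replicate k Letter.one) s1 s2 ∧
        (s2, Letter.dollar, q') ∈ T := by
  simp only [thresholdTok, steps_cons, steps_append, steps_nil, exists_eq_right]
  tauto

lemma etok_iff {T : List (ℕ × Letter × ℕ)} {e : ℕ × ℕ} {q q'} :
    Steps T (etok e) q q' ↔
      ∃ s1 s2 s3 s4 s5, (q, Letter.tri, s1) ∈ T ∧
        Steps T (List.replicate e.1 Letter.lett) s1 s2 ∧ (s2, Letter.hash, s3) ∈ T ∧
        (s3, Letter.tri, s4) ∈ T ∧ Steps T (List.replicate e.2 Letter.lett) s4 s5 ∧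
        (s5, Letter.dollar, q') ∈ T := by
  simp only [etok, leftTok, rightTok, List.cons_append, steps_cons, steps_append, steps_nil, exists_eq_right]
  tauto

lemma esteps_iff_chain {T : List (ℕ × Letter × ℕ)} {es : List (ℕ × ℕ)} {q q'} :
    ESteps T es q q' ↔
      ∃ r : ℕ → ℕ, r 0 = q ∧ r es.length = q' ∧
        ∀ i < es.length, Steps T (etok (es.getD i (0, 0))) (r i) (r (i + 1)) := by
  induction es generalizing q with
  | nil =>
      simp only [esteps_nil, List.length_nil]
      constructor
      · rintro rfl; exact ⟨fun _ => q, rfl, rfl, fun i hi => absurd hi (Nat.not_lt_zero i)⟩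
      · rintro ⟨r, h0, hl, _⟩; rw [← h0, hl]
  | cons e es ih =>
      rw [esteps_cons]
      constructor
      · rintro ⟨s, hs, hrest⟩
        obtain ⟨r, h0, hl, hstep⟩ := ih.1 hrest
        refine ⟨fun n => if n = 0 then q else r (n - 1), by simp, by simp [hl], ?_⟩
        intro i hi
        cases i with
        | zero => simpa [h0] using hs
        | succ i =>
            simpa using hstep i (by simpa [Nat.succ_lt_succ_iff] using hi)
      · rintro ⟨r, h0, hl, hstep⟩
        refine ⟨r 1, by simpa [h0] using hstep 0 (by simp), ?_⟩
        refine ih.2 ⟨fun n => r (n + 1), rfl, by simpa using hl, ?_⟩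
        intro i hi
        simpa using hstep (i + 1) (by simpa using hi)
/-! ### Vertex-cover lemmas -/

lemma mem_graphOf_V_left {es : List (ℕ × ℕ)} {y : ℕ × ℕ} (h : y ∈ es) :
    y.1 ∈ (graphOf es).V := by
  simp only [graphOf, Finset.mem_union, List.mem_toFinset, List.mem_map]
  exact Or.inl ⟨y, h, rfl⟩

lemma mem_graphOf_V_right {es : List (ℕ × ℕ)} {y : ℕ × ℕ} (h : y ∈ es) :
    y.2 ∈ (graphOf es).V := by
  simp only [graphOf, Finset.mem_union, List.mem_toFinset, List.mem_map]
  exact Or.inr ⟨y, h, rfl⟩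

lemma mem_graphOf_E {es : List (ℕ × ℕ)} {e' : Sym2 ℕ} :
    e' ∈ (graphOf es).E ↔ ∃ y ∈ es, y.1 ≠ y.2 ∧ e' = s(y.1, y.2) := by
  simp only [graphOf, List.mem_toFinset, List.mem_map, List.mem_filter,
    decide_eq_true_eq]
  constructor
  · rintro ⟨y, ⟨hy, hne⟩, rfl⟩; exact ⟨y, hy, hne, rfl⟩
  · rintro ⟨y, hy, hne, rfl⟩; exact ⟨y, ⟨hy, hne⟩, rfl⟩

lemma hasVC_map (f : ℕ → ℕ) {es : List (ℕ × ℕ)} {k : ℕ} (h : HasVC (graphOf es) k) :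
    HasVC (graphOf (es.map (Prod.map f f))) k := by
  obtain ⟨S, hSV, hSk, hcov⟩ := h
  refine ⟨(S.image f) ∩ (graphOf (es.map (Prod.map f f))).V, Finset.inter_subset_right,
    le_trans (le_trans (Finset.card_le_card Finset.inter_subset_left)
      (Finset.card_image_le)) hSk, ?_⟩
  intro e' he'
  obtain ⟨y', hy', hne', rfl⟩ := mem_graphOf_E.1 he'
  obtain ⟨y, hy, rfl⟩ := List.mem_map.1 hy'
  have hne : y.1 ≠ y.2 := fun hc => hne' (by simp [Prod.map, hc])
  obtain ⟨a, haS, hae⟩ := hcov s(y.1, y.2) (mem_graphOf_E.2 ⟨y, hy, hne, rfl⟩)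
  rw [Sym2.mem_iff] at hae
  refine ⟨f a, Finset.mem_inter.2 ⟨Finset.mem_image.2 ⟨a, haS, rfl⟩, ?_⟩, ?_⟩
  · rcases hae with rfl | rfl
    · exact mem_graphOf_V_left (List.mem_map.2 ⟨y, hy, rfl⟩)
    · exact mem_graphOf_V_right (List.mem_map.2 ⟨y, hy, rfl⟩)
  · rw [Sym2.mem_iff]
    rcases hae with rfl | rfl
    · exact Or.inl rfl
    · exact Or.inr rfl

lemma hasVC_subset {es es' : List (ℕ × ℕ)} {k : ℕ} (hsub : ∀ e ∈ es', e ∈ es)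
    (h : HasVC (graphOf es) k) : HasVC (graphOf es') k := by
  obtain ⟨S, hSV, hSk, hcov⟩ := h
  refine ⟨S ∩ (graphOf es').V, Finset.inter_subset_right,
    le_trans (Finset.card_le_card Finset.inter_subset_left) hSk, ?_⟩
  intro e' he'
  obtain ⟨y, hy, hne, rfl⟩ := mem_graphOf_E.1 he'
  obtain ⟨a, haS, hae⟩ := hcov s(y.1, y.2) (mem_graphOf_E.2 ⟨y, hsub y hy, hne, rfl⟩)
  refine ⟨a, Finset.mem_inter.2 ⟨haS, ?_⟩, hae⟩
  rw [Sym2.mem_iff] at hae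
  rcases hae with rfl | rfl
  · exact mem_graphOf_V_left hy
  · exact mem_graphOf_V_right hy

lemma hasVC_of_length_le {es : List (ℕ × ℕ)} {k : ℕ} (h : es.length ≤ k) :
    HasVC (graphOf es) k := by
  refine ⟨((es.filter (fun e => e.1 ≠ e.2)).map Prod.fst).toFinset, ?_, ?_, ?_⟩
  · intro a ha
    simp only [List.mem_toFinset, List.mem_map, List.mem_filter] at ha
    obtain ⟨y, ⟨hy, _⟩, rfl⟩ := ha
    exact mem_graphOf_V_left hy
  · calc ((es.filter (fun e => e.1 ≠ e.2)).map Prod.fst).toFinset.card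
        ≤ ((es.filter (fun e => e.1 ≠ e.2)).map Prod.fst).length :=
          List.toFinset_card_le _
      _ ≤ es.length := by
          rw [List.length_map]; exact le_trans (List.length_filter_le _ _) le_rfl
      _ ≤ k := h
  · intro e' he'
    obtain ⟨y, hy, hne, rfl⟩ := mem_graphOf_E.1 he'
    refine ⟨y.1, ?_, Sym2.mem_iff.2 (Or.inl rfl)⟩
    simp only [List.mem_toFinset, List.mem_map, List.mem_filter, decide_eq_true_eq]
    exact ⟨y, ⟨hy, hne⟩, rfl⟩
/-! ### Phase 1: shrinking the number of edge tokens -/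

lemma getD_take_append_drop {es : List (ℕ × ℕ)} {i j n : ℕ} (hij : i ≤ j)
    (hj : j ≤ es.length) (d : ℕ × ℕ) :
    (es.take i ++ es.drop j).getD n d =
      if n < i then es.getD n d else es.getD (n + (j - i)) d := by
  have hlen : (es.take i).length = i := by rw [List.length_take]; omega
  by_cases h : n < i
  · rw [if_pos h, List.getD_append _ _ _ _ (by omega)]
    rw [List.getD_eq_getElem?_getD, List.getD_eq_getElem?_getD, List.getElem?_take]
    simp [h]
  · rw [if_neg h]
    rw [List.getD_append_right _ _ _ _ (by omega), hlen]
    rw [List.getD_eq_getElem?_getD, List.getD_eq_getElem?_getD, List.getElem?_drop]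
    congr 2
    omega

lemma esteps_cut {T : List (ℕ × Letter × ℕ)} {es : List (ℕ × ℕ)} {q q' : ℕ}
    {r : ℕ → ℕ} (hr0 : r 0 = q) (hrl : r es.length = q')
    (hstep : ∀ n < es.length, Steps T (etok (es.getD n (0, 0))) (r n) (r (n + 1)))
    {i j : ℕ} (hij : i < j) (hj : j ≤ es.length) (heq : r i = r j) :
    ESteps T (es.take i ++ es.drop j) q q' := by
  have hlen : (es.take i ++ es.drop j).length = i + (es.length - j) := by
    rw [List.length_append, List.length_take, List.length_drop]
    omega
  refine esteps_iff_chain.2 ⟨fun n => if n ≤ i then r n else r (n + (j - i)), by simp [hr0], ?_, ?_⟩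
  · rw [hlen]
    simp only []
    by_cases h : i + (es.length - j) ≤ i
    · rw [if_pos h, show i + (es.length - j) = i from by omega, heq,
        show j = es.length from by omega, hrl]
    · rw [if_neg h, show i + (es.length - j) + (j - i) = es.length from by omega, hrl]
  · intro n hn
    rw [hlen] at hn
    simp only []
    rw [getD_take_append_drop (le_of_lt hij) hj]
    by_cases h1 : n + 1 ≤ i
    · rw [if_pos (by omega : n < i), if_pos (by omega : n ≤ i), if_pos h1]
      exact hstep n (by omega)
    · by_cases h2 : n ≤ i
      · have hni : n = i := by omega
        rw [if_neg (by omega : ¬ n < i), if_pos h2, if_neg h1, hni, heq,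
          show i + 1 + (j - i) = j + 1 from by omega, show i + (j-i) = j from by omega]
        exact hstep j (by omega)
      · rw [if_neg (by omega : ¬ n < i), if_neg h2, if_neg h1,
          show n + 1 + (j - i) = n + (j - i) + 1 from by omega]
        exact hstep (n + (j - i)) (by omega)

lemma esteps_shrink {T : List (ℕ × Letter × ℕ)} {es : List (ℕ × ℕ)} {q q' : ℕ}
    (h : ESteps T es q q') :
    ∃ es', es'.length ≤ (targets T).card ∧ (∀ e ∈ es', e ∈ es) ∧ ESteps T es' q q' := by
  generalize hn : es.length = n
  induction n using Nat.strong_induction_on generalizing es with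
  | _ n ih =>
  subst hn
  by_cases hle : es.length ≤ (targets T).card
  · exact ⟨es, hle, fun e he => he, h⟩
  · push_neg at hle
    obtain ⟨r, hr0, hrl, hstep⟩ := esteps_iff_chain.1 h
    have hmem : ∀ i ∈ Finset.Icc 1 es.length, r i ∈ targets T := by
      intro i hi
      rw [Finset.mem_Icc] at hi
      have hlt : i - 1 < es.length := by omega
      have h2 := steps_mem_targets (hstep (i - 1) hlt) (by simp [etok, leftTok])
      rwa [show i - 1 + 1 = i from by omega] at h2
    obtain ⟨i, hi, j, hj, hij, heq⟩ :=
      Finset.exists_ne_map_eq_of_card_lt_of_maps_to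
        (by rw [Nat.card_Icc]; omega) hmem
    rw [Finset.mem_Icc] at hi hj
    have key : ∀ a b : ℕ, a < b → b ≤ es.length → r a = r b →
        ∃ es', es'.length ≤ (targets T).card ∧ (∀ e ∈ es', e ∈ es) ∧ ESteps T es' q q' := by
      intro a b hab hb hreq
      have hcut := esteps_cut hr0 hrl hstep hab hb hreq
      have hlen : (es.take a ++ es.drop b).length < es.length := by
        rw [List.length_append, List.length_take, List.length_drop]
        omega
      obtain ⟨es', h1, h2, h3⟩ := ih _ hlen hcut rfl
      refine ⟨es', h1, fun e he => ?_, h3⟩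
      have := h2 e he
      rw [List.mem_append] at this
      rcases this with h4 | h4
      · exact List.mem_of_mem_take h4
      · exact List.mem_of_mem_drop h4
    rcases Nat.lt_or_ge i j with hlt | hge
    · exact key i j hlt hj.2 heq
    · exact key j i (by omega) hi.2 heq.symm
/-! ### Phase 2: shrinking the threshold -/

lemma thr_shrink {T : List (ℕ × Letter × ℕ)} {k q q' : ℕ}
    (h : Steps T (thresholdTok k) q q') :
    ∃ k', k' ≤ 2 * (targets T).card ∧ (k' = k ∨ (targets T).card < k') ∧
      Steps T (thresholdTok k') q q' := by
  induction k using Nat.strong_induction_on with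
  | _ k ih =>
  set NQ := (targets T).card with hNQ
  by_cases hle : k ≤ 2 * NQ
  · exact ⟨k, hle, Or.inl rfl, h⟩
  · push_neg at hle
    obtain ⟨s1, s2, h1, h2, h3⟩ := thr_iff.1 h
    obtain ⟨ρ, hρ0, hρk, hrun⟩ := steps_replicate_iff.1 h2
    have hmemt : ∀ t ∈ Finset.range (NQ + 1), ρ t ∈ targets T := by
      intro t ht
      rw [Finset.mem_range] at ht
      refine run_mem_targets hrun ?_ t (by omega)
      rw [hρ0]
      exact List.mem_toFinset.2 (List.mem_map.2 ⟨(q, Letter.tri, s1), h1, rfl⟩)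
    obtain ⟨t, ht, t', ht', htt', heq⟩ :=
      Finset.exists_ne_map_eq_of_card_lt_of_maps_to
        (by rw [Finset.card_range]; omega) hmemt
    rw [Finset.mem_range] at ht ht'
    have key : ∀ a b : ℕ, a < b → b ≤ NQ → ρ a = ρ b →
        ∃ k', k' ≤ 2 * NQ ∧ (k' = k ∨ NQ < k') ∧ Steps T (thresholdTok k') q q' := by
      intro a b hab hb hreq
      have hcut : Steps T (List.replicate (k - (b - a)) Letter.one) s1 s2 := by
        have := run_cut hrun hab (by omega) hreq
        rwa [hρ0, hρk] at this
      have hthr : Steps T (thresholdTok (k - (b - a))) q q' :=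
        thr_iff.2 ⟨s1, s2, h1, hcut, h3⟩
      obtain ⟨k', hk'le, hk'or, hk'steps⟩ := ih (k - (b - a)) (by omega) hthr
      refine ⟨k', hk'le, Or.inr ?_, hk'steps⟩
      rcases hk'or with rfl | hlt
      · omega
      · exact hlt
    rcases Nat.lt_or_ge t t' with hlt | hge
    · exact key t t' hlt (by omega) heq
    · exact key t' t (by omega) (by omega) heq.symm
/-! ### Phase 3: shrinking the vertex numbers -/

/-- The bound on vertex numbers. -/
def XB (T : List (ℕ × Letter × ℕ)) : ℕ := (targets T).card ^ (2 * (targets T).card)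

lemma sum_map_le {f : ℕ → ℕ} (hf : ∀ v, f v ≤ v) (es : List (ℕ × ℕ)) :
    ((es.map (Prod.map f f)).map (fun e => e.1 + e.2)).sum ≤
      (es.map (fun e => e.1 + e.2)).sum := by
  induction es with
  | nil => simp
  | cons e es ih =>
      simp only [List.map_cons, List.sum_cons]
      exact Nat.add_le_add (Nat.add_le_add (hf e.1) (hf e.2)) ih

lemma sum_map_lt {f : ℕ → ℕ} (hf : ∀ v, f v ≤ v) {es : List (ℕ × ℕ)} {e0 : ℕ × ℕ}
    (he0 : e0 ∈ es) (hstrict : f e0.1 + f e0.2 < e0.1 + e0.2) :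
    ((es.map (Prod.map f f)).map (fun e => e.1 + e.2)).sum <
      (es.map (fun e => e.1 + e.2)).sum := by
  induction es with
  | nil => cases he0
  | cons e es ih =>
      simp only [List.map_cons, List.sum_cons]
      rcases List.mem_cons.1 he0 with rfl | hmem
      · exact Nat.add_lt_add_of_lt_of_le hstrict (sum_map_le hf es)
      · exact Nat.add_lt_add_of_le_of_lt (Nat.add_le_add (hf e.1) (hf e.2)) (ih hmem)

lemma esteps_values_cut {T : List (ℕ × Letter × ℕ)} {es : List (ℕ × ℕ)} {q q' : ℕ}
    (hlen : es.length ≤ (targets T).card) (h : ESteps T es q q')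
    {e0 : ℕ × ℕ} (he0 : e0 ∈ es) (hbig : XB T ≤ e0.1 ∨ XB T ≤ e0.2) :
    ∃ f : ℕ → ℕ, (∀ v, f v ≤ v) ∧ f 0 = 0 ∧
      (f e0.1 + f e0.2 < e0.1 + e0.2) ∧
      ESteps T (es.map (Prod.map f f)) q q' := by
  classical
  set NQ := (targets T).card with hNQdef
  set X := XB T with hXdef
  set m := es.length with hm
  have hm1 : 1 ≤ m := by
    rw [hm]
    exact List.length_pos_iff.2 (List.ne_nil_of_mem he0)
  have hNQ1 : 1 ≤ NQ := le_trans hm1 hlen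
  have hX1 : 1 ≤ X := Nat.one_le_iff_ne_zero.2 (by
    rw [hXdef]
    exact pow_ne_zero _ (by omega))
  obtain ⟨r, hr0, hrl, hstep⟩ := esteps_iff_chain.1 h
  set pp : ℕ → ℕ := fun i => (es.getD i (0, 0)).1 with hpp
  set qq : ℕ → ℕ := fun i => (es.getD i (0, 0)).2 with hqq
  have H : ∀ i : ℕ, ∃ (s : ℕ × ℕ × ℕ × ℕ × ℕ) (ρ1 ρ2 : ℕ → ℕ), i < m →
      (r i, Letter.tri, s.1) ∈ T ∧ ρ1 0 = s.1 ∧ ρ1 (pp i) = s.2.1 ∧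
      IsRun T ρ1 Letter.lett (pp i) ∧ (s.2.1, Letter.hash, s.2.2.1) ∈ T ∧
      (s.2.2.1, Letter.tri, s.2.2.2.1) ∈ T ∧ ρ2 0 = s.2.2.2.1 ∧
      ρ2 (qq i) = s.2.2.2.2 ∧ IsRun T ρ2 Letter.lett (qq i) ∧
      (s.2.2.2.2, Letter.dollar, r (i + 1)) ∈ T := by
    intro i
    by_cases hi : i < m
    · obtain ⟨s1, s2, s3, s4, s5, h1, h2, h3, h4, h5, h6⟩ := etok_iff.1 (hstep i hi)
      obtain ⟨ρ1, hρ10, hρ1p, hρ1run⟩ := steps_replicate_iff.1 h2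
      obtain ⟨ρ2, hρ20, hρ2q, hρ2run⟩ := steps_replicate_iff.1 h5
      exact ⟨(s1, s2, s3, s4, s5), ρ1, ρ2, fun _ =>
        ⟨h1, hρ10, hρ1p, hρ1run, h3, h4, hρ20, hρ2q, hρ2run, h6⟩⟩
    · exact ⟨(0, 0, 0, 0, 0), id, id, fun hc => absurd hc hi⟩
  choose D ρ1 ρ2 hD using H
  have hρ1mem : ∀ i : ℕ, i < m → ∀ t ≤ pp i, ρ1 i t ∈ targets T := by
    intro i hi
    obtain ⟨h1, h2, _, h4, _⟩ := hD i hi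
    have hmem0 : ρ1 i 0 ∈ targets T := by
      rw [h2]
      exact List.mem_toFinset.2 (List.mem_map.2 ⟨(r i, Letter.tri, (D i).1), h1, rfl⟩)
    exact run_mem_targets h4 hmem0
  have hρ2mem : ∀ i : ℕ, i < m → ∀ t ≤ qq i, ρ2 i t ∈ targets T := by
    intro i hi
    obtain ⟨_, _, _, _, _, h6, h7, _, h9, _⟩ := hD i hi
    have hmem0 : ρ2 i 0 ∈ targets T := by
      rw [h7]
      exact List.mem_toFinset.2 (List.mem_map.2 ⟨((D i).2.2.1, Letter.tri, (D i).2.2.2.1), h6, rfl⟩)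
    exact run_mem_targets h9 hmem0
  -- the tuple function for the pigeonhole argument
  set F : Fin (X + 1) → Fin m → ↥(targets T) × ↥(targets T) :=
    fun t i =>
      (⟨ρ1 i.val (min t.val (pp i.val)), hρ1mem i.val i.isLt _ (min_le_right _ _)⟩,
       ⟨ρ2 i.val (min t.val (qq i.val)), hρ2mem i.val i.isLt _ (min_le_right _ _)⟩) with hF
  have hcard : Fintype.card (Fin m → ↥(targets T) × ↥(targets T)) <
      Fintype.card (Fin (X + 1)) := by
    rw [Fintype.card_fun, Fintype.card_fin, Fintype.card_prod, Fintype.card_coe,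
      Fintype.card_fin]
    calc (NQ * NQ) ^ m ≤ (NQ * NQ) ^ NQ :=
          Nat.pow_le_pow_right (Nat.mul_pos hNQ1 hNQ1) hlen
      _ = NQ ^ (2 * NQ) := by rw [← pow_two, ← pow_mul, Nat.mul_comm]
      _ = X := by rw [hXdef]; rfl
      _ < X + 1 := Nat.lt_succ_self X
  obtain ⟨x, y, hxy, hFxy⟩ := Fintype.exists_ne_map_eq_of_card_lt F hcard
  set a := min x.val y.val with ha
  set b := max x.val y.val with hb
  have hab : a < b := by
    rcases Nat.lt_or_ge x.val y.val with h' | h'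
    · simp [ha, hb]; omega
    · have : x.val ≠ y.val := fun hc => hxy (Fin.ext hc)
      simp [ha, hb]; omega
  have hbX : b ≤ X := by
    have := x.isLt
    have := y.isLt
    omega
  have hFab : ∀ n : ℕ, ∀ hn : n < m,
      (ρ1 n (min a (pp n)) = ρ1 n (min b (pp n)) ∧
       ρ2 n (min a (qq n)) = ρ2 n (min b (qq n))) := by
    intro n hn
    have h1 := congrFun hFxy ⟨n, hn⟩
    rw [hF] at h1
    simp only [Prod.mk.injEq, Subtype.mk.injEq] at h1
    rcases Nat.lt_or_ge x.val y.val with h' | h'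
    · have ha' : a = x.val := by omega
      have hb' : b = y.val := by omega
      rw [ha', hb']; exact h1
    · have ha' : a = y.val := by omega
      have hb' : b = x.val := by omega
      rw [ha', hb']; exact ⟨h1.1.symm, h1.2.symm⟩
  set δ := b - a with hδ
  set f : ℕ → ℕ := fun v => if X ≤ v then v - δ else v with hf
  have hfle : ∀ v, f v ≤ v := by
    intro v
    show (if X ≤ v then v - δ else v) ≤ v
    split <;> omega
  have hf0 : f 0 = 0 := by
    show (if X ≤ 0 then 0 - δ else 0) = 0
    split <;> omega
  have hstrictv : ∀ v, X ≤ v → f v < v := by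
    intro v hv
    show (if X ≤ v then v - δ else v) < v
    rw [if_pos hv]
    omega
  have hstrict : f e0.1 + f e0.2 < e0.1 + e0.2 := by
    rcases hbig with hb1 | hb2
    · exact Nat.add_lt_add_of_lt_of_le (hstrictv _ hb1) (hfle _)
    · exact Nat.add_lt_add_of_le_of_lt (hfle _) (hstrictv _ hb2)
  refine ⟨f, hfle, hf0, hstrict, ?_⟩
  -- rebuild the chain
  refine esteps_iff_chain.2 ⟨r, hr0, ?_, ?_⟩
  · rwa [List.length_map, ← hm]
  · intro n hn
    rw [List.length_map, ← hm] at hn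
    have hgetD : (es.map (Prod.map f f)).getD n (0, 0) =
        Prod.map f f (es.getD n (0, 0)) := by
      have := List.getD_map es (0, 0) (f := Prod.map f f) (n := n)
      rwa [show Prod.map f f (0, 0) = (0, 0) from by simp [Prod.map, hf0]] at this
    rw [hgetD]
    obtain ⟨h1, h2, h3, h4, h5, h6, h7, h8, h9, h10⟩ := hD n hn
    refine etok_iff.2 ⟨(D n).1, (D n).2.1, (D n).2.2.1, (D n).2.2.2.1, (D n).2.2.2.2,
      h1, ?_, h5, h6, ?_, h10⟩
    · -- first replicate block, length f (pp n)
      show Steps T (List.replicate (f ((es.getD n (0,0)).1)) Letter.lett) (D n).1 (D n).2.1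
      by_cases hc : X ≤ pp n
      · have heq' : ρ1 n a = ρ1 n b := by
          have := (hFab n hn).1
          rwa [min_eq_left (by omega), min_eq_left (by omega)] at this
        have := run_cut h4 hab (by omega) heq'
        rw [h2, h3] at this
        have hfp : f ((es.getD n (0,0)).1) = pp n - δ := by
          rw [hf]; simp only [hpp]; rw [if_pos hc]
        rwa [hfp]
      · have hfp : f ((es.getD n (0,0)).1) = pp n := by
          rw [hf]; simp only [hpp]; rw [if_neg hc]
        rw [hfp]
        exact steps_replicate_iff.2 ⟨ρ1 n, h2, h3, h4⟩
    · show Steps T (List.replicate (f ((es.getD n (0,0)).2)) Letter.lett)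
        (D n).2.2.2.1 (D n).2.2.2.2
      by_cases hc : X ≤ qq n
      · have heq' : ρ2 n a = ρ2 n b := by
          have := (hFab n hn).2
          rwa [min_eq_left (by omega), min_eq_left (by omega)] at this
        have := run_cut h9 hab (by omega) heq'
        rw [h7, h8] at this
        have hfp : f ((es.getD n (0,0)).2) = qq n - δ := by
          rw [hf]; simp only [hqq]; rw [if_pos hc]
        rwa [hfp]
      · have hfp : f ((es.getD n (0,0)).2) = qq n := by
          rw [hf]; simp only [hqq]; rw [if_neg hc]
        rw [hfp]
        exact steps_replicate_iff.2 ⟨ρ2 n, h7, h8, h9⟩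

lemma esteps_values_shrink {T : List (ℕ × Letter × ℕ)} {es : List (ℕ × ℕ)} {q q' : ℕ}
    (hlen : es.length ≤ (targets T).card) (h : ESteps T es q q') :
    ∃ es', es'.length = es.length ∧ (∀ e ∈ es', e.1 < XB T ∧ e.2 < XB T) ∧
      ESteps T es' q q' ∧ ∀ k, HasVC (graphOf es) k → HasVC (graphOf es') k := by
  generalize hμ : (es.map (fun e => e.1 + e.2)).sum = μ
  induction μ using Nat.strong_induction_on generalizing es with
  | _ μ ih =>
  subst hμ
  by_cases hsmall : ∀ e ∈ es, e.1 < XB T ∧ e.2 < XB T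
  · exact ⟨es, rfl, hsmall, h, fun k hk => hk⟩
  · push_neg at hsmall
    obtain ⟨e0, he0, hbig⟩ := hsmall
    have hbig' : XB T ≤ e0.1 ∨ XB T ≤ e0.2 := by
      by_cases h1 : XB T ≤ e0.1
      · exact Or.inl h1
      · exact Or.inr (by omega)
    obtain ⟨f, hfle, hf0, hstrict, hsteps⟩ := esteps_values_cut hlen h he0 hbig'
    have hlt : ((es.map (Prod.map f f)).map (fun e => e.1 + e.2)).sum <
        (es.map (fun e => e.1 + e.2)).sum := sum_map_lt hfle he0 hstrict
    obtain ⟨es', hl, hs, hst, hvc⟩ :=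
      ih _ hlt (by rwa [List.length_map]) hsteps rfl
    exact ⟨es', by rwa [List.length_map] at hl, hs, hst,
      fun k hk => hvc k (hasVC_map f hk)⟩
/-! ### The bounded characterization -/

lemma mem_foldl_encStep {T : List (ℕ × Letter × ℕ)} {w : Word} :
    ∀ (S : Set ℕ) (q' : ℕ), q' ∈ w.foldl (encStep T) S ↔ ∃ q ∈ S, Steps T w q q' := by
  induction w with
  | nil => intro S q'; simp [Steps]
  | cons c w ih =>
      intro S q'
      rw [List.foldl_cons, ih]
      constructor
      · rintro ⟨q1, hq1, hsteps⟩
        obtain ⟨q, hq, htr⟩ := hq1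
        exact ⟨q, hq, q1, htr, hsteps⟩
      · rintro ⟨q, hq, q1, htr, hsteps⟩
        exact ⟨q1, ⟨q, hq, htr⟩, hsteps⟩

lemma mem_encLang_iff {M : NFAEnc} {w : Word} :
    w ∈ encLang M ↔ ∃ qf ∈ M.2.2, Steps M.1 w M.2.1 qf := by
  unfold encLang
  simp only [Set.mem_setOf_eq]
  constructor
  · rintro ⟨qf, hqf, hmem⟩
    obtain ⟨q, hq, hsteps⟩ := (mem_foldl_encStep _ _).1 hmem
    rcases hq with rfl
    exact ⟨qf, hqf, hsteps⟩
  · rintro ⟨qf, hqf, hsteps⟩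
    exact ⟨qf, hqf, (mem_foldl_encStep _ _).2 ⟨M.2.1, rfl, hsteps⟩⟩

lemma pred_iff (M : NFAEnc) :
    (∃ w : Word, w ∈ encLang M ∧ w ∈ Enc ∧
        ∃ (G : EncGraph) (k : ℕ), decodesTo w G k ∧ HasVC G k) ↔
      ∃ k es, encode k es ∈ encLang M ∧ HasVC (graphOf es) k := by
  constructor
  · rintro ⟨w, hL, _, G, k, ⟨es, rfl, rfl⟩, hVC⟩
    exact ⟨k, es, hL, hVC⟩
  · rintro ⟨k, es, hL, hVC⟩
    exact ⟨encode k es, hL, ⟨k, es, rfl⟩, graphOf es, k, ⟨es, rfl, rfl⟩, hVC⟩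

theorem bounded_iff (M : NFAEnc) :
    (∃ k es, encode k es ∈ encLang M ∧ HasVC (graphOf es) k) ↔
      ∃ k, k ≤ 2 * (targets M.1).card ∧
        ∃ es, es.length ≤ (targets M.1).card ∧
          (∀ e ∈ es, e.1 < XB M.1 ∧ e.2 < XB M.1) ∧
          encode k es ∈ encLang M ∧ HasVC (graphOf es) k := by
  constructor
  · rintro ⟨k, es, hL, hVC⟩
    obtain ⟨qf, hqf, hsteps⟩ := mem_encLang_iff.1 hL
    rw [encode_eq, steps_append] at hsteps
    obtain ⟨r0, hthr, hes⟩ := hsteps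
    obtain ⟨es1, hes1len, hes1sub, hes1steps⟩ := esteps_shrink hes
    obtain ⟨k2, hk2le, hk2or, hk2steps⟩ := thr_shrink hthr
    obtain ⟨es3, hes3len, hes3small, hes3steps, hes3vc⟩ :=
      esteps_values_shrink hes1len hes1steps
    have hVC1 : HasVC (graphOf es1) k := hasVC_subset hes1sub hVC
    have hVC2 : HasVC (graphOf es1) k2 := by
      rcases hk2or with rfl | hlt
      · exact hVC1
      · exact hasVC_of_length_le (by omega)
    refine ⟨k2, hk2le, es3, by omega, hes3small, ?_, hes3vc k2 hVC2⟩
    rw [mem_encLang_iff]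
    exact ⟨qf, hqf, by rw [encode_eq, steps_append]; exact ⟨r0, hk2steps, hes3steps⟩⟩
  · rintro ⟨k, _, es, _, _, hL, hVC⟩
    exact ⟨k, es, hL, hVC⟩
/-! ### The decision procedure -/

def anyB {α : Type} (l : List α) (p : α → Bool) : Bool :=
  l.foldr (fun a r => p a || r) false

lemma anyB_eq_true {α : Type} {l : List α} {p : α → Bool} :
    anyB l p = true ↔ ∃ a ∈ l, p a = true := by
  induction l with
  | nil => simp [anyB]
  | cons a l ih =>
      simp only [anyB, List.foldr_cons, Bool.or_eq_true, List.mem_cons]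
      rw [show (List.foldr (fun a r => p a || r) false l) = anyB l p from rfl, ih]
      constructor
      · rintro (h | ⟨b, hb, hpb⟩)
        · exact ⟨a, Or.inl rfl, h⟩
        · exact ⟨b, Or.inr hb, hpb⟩
      · rintro ⟨b, (rfl | hb), hpb⟩
        · exact Or.inl hpb
        · exact Or.inr ⟨b, hb, hpb⟩

def memB (a : ℕ) (l : List ℕ) : Bool := anyB l (fun b => b == a)

lemma memB_iff {a : ℕ} {l : List ℕ} : memB a l = true ↔ a ∈ l := by
  rw [memB, anyB_eq_true]
  simp only [beq_iff_eq]
  constructor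
  · rintro ⟨b, hb, rfl⟩; exact hb
  · intro h; exact ⟨a, h, rfl⟩

def stepL (T : List (ℕ × Letter × ℕ)) (S : List ℕ) (c : Letter) : List ℕ :=
  T.foldr (fun tr r => if tr.2.1 == c && memB tr.1 S then tr.2.2 :: r else r) []

lemma mem_stepL {T : List (ℕ × Letter × ℕ)} {S : List ℕ} {c : Letter} {q' : ℕ} :
    q' ∈ stepL T S c ↔ ∃ q ∈ S, (q, c, q') ∈ T := by
  induction T with
  | nil => simp [stepL]
  | cons tr T ih =>
      rw [stepL, List.foldr_cons]
      rw [show (List.foldr (fun tr r => if tr.2.1 == c && memB tr.1 S then tr.2.2 :: r else r)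
        [] T) = stepL T S c from rfl]
      by_cases hcond : tr.2.1 == c && memB tr.1 S
      · rw [if_pos hcond]
        rw [Bool.and_eq_true, beq_iff_eq, memB_iff] at hcond
        simp only [List.mem_cons, ih]
        constructor
        · rintro (rfl | ⟨q, hq, hmem⟩)
          · exact ⟨tr.1, hcond.2, Or.inl (by rw [← hcond.1])⟩
          · exact ⟨q, hq, Or.inr hmem⟩
        · rintro ⟨q, hq, (heq | hmem)⟩
          · left; rw [← heq]
          · exact Or.inr ⟨q, hq, hmem⟩
      · rw [if_neg hcond, ih]
        constructor
        · rintro ⟨q, hq, hmem⟩; exact ⟨q, hq, List.mem_cons_of_mem _ hmem⟩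
        · rintro ⟨q, hq, hmem⟩
          rcases List.mem_cons.1 hmem with heq | hmem'
          · exfalso
            apply hcond
            cases heq
            rw [Bool.and_eq_true, beq_iff_eq, memB_iff]
            exact ⟨rfl, hq⟩
          · exact ⟨q, hq, hmem'⟩

lemma foldl_stepL_mem {T : List (ℕ × Letter × ℕ)} {w : Word} :
    ∀ (S : List ℕ) (q' : ℕ), q' ∈ w.foldl (stepL T) S ↔ ∃ q ∈ S, Steps T w q q' := by
  induction w with
  | nil => intro S q'; simp [Steps]
  | cons c w ih =>
      intro S q'
      rw [List.foldl_cons, ih]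
      constructor
      · rintro ⟨q1, hq1, hsteps⟩
        obtain ⟨q, hq, htr⟩ := mem_stepL.1 hq1
        exact ⟨q, hq, q1, htr, hsteps⟩
      · rintro ⟨q, hq, q1, htr, hsteps⟩
        exact ⟨q1, mem_stepL.2 ⟨q, hq, htr⟩, hsteps⟩

def accB (M : NFAEnc) (w : Word) : Bool :=
  anyB M.2.2 (fun qf => memB qf (w.foldl (stepL M.1) [M.2.1]))

lemma accB_iff {M : NFAEnc} {w : Word} : accB M w = true ↔ w ∈ encLang M := by
  rw [accB, anyB_eq_true, mem_encLang_iff]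
  constructor
  · rintro ⟨qf, hqf, hmem⟩
    rw [memB_iff, foldl_stepL_mem] at hmem
    obtain ⟨q, hq, hsteps⟩ := hmem
    rcases List.mem_singleton.1 hq with rfl
    exact ⟨qf, hqf, hsteps⟩
  · rintro ⟨qf, hqf, hsteps⟩
    refine ⟨qf, hqf, ?_⟩
    rw [memB_iff, foldl_stepL_mem]
    exact ⟨M.2.1, List.mem_singleton.2 rfl, hsteps⟩

def dlist (l : List ℕ) : List ℕ := l.foldr (fun a r => if memB a r then r else a :: r) []

lemma dlist_eq_dedup (l : List ℕ) : dlist l = l.dedup := by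
  induction l with
  | nil => simp [dlist]
  | cons a l ih =>
      rw [dlist, List.foldr_cons,
        show (List.foldr (fun a r => if memB a r then r else a :: r) [] l) = dlist l from rfl,
        ih]
      by_cases h : a ∈ l.dedup
      · rw [if_pos (memB_iff.2 h), List.dedup_cons_of_mem (List.mem_dedup.1 h)]
      · rw [if_neg (fun hc => h (memB_iff.1 hc)),
          List.dedup_cons_of_notMem (fun hc => h (List.mem_dedup.2 hc))]

def dcount (l : List ℕ) : ℕ := (dlist l).length

lemma dcount_eq (l : List ℕ) : dcount l = l.toFinset.card := by
  rw [dcount, dlist_eq_dedup, List.card_toFinset]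

def nonloopL (es : List (ℕ × ℕ)) : List (ℕ × ℕ) :=
  es.foldr (fun e r => if e.1 == e.2 then r else e :: r) []

lemma nonloopL_eq (es : List (ℕ × ℕ)) :
    nonloopL es = es.filter (fun e => e.1 ≠ e.2) := by
  induction es with
  | nil => simp [nonloopL]
  | cons e es ih =>
      rw [nonloopL, List.foldr_cons,
        show (List.foldr (fun e r => if e.1 == e.2 then r else e :: r) [] es) = nonloopL es
          from rfl, ih, List.filter_cons]
      by_cases h : e.1 = e.2
      · rw [if_pos (beq_iff_eq.2 h), if_neg (by simp [h])]
      · rw [if_neg (by simp [h]), if_pos (by simp [h])]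

def choiceL : List (ℕ × ℕ) → List (List ℕ)
  | [] => [[]]
  | e :: l => (choiceL l).map (e.1 :: ·) ++ (choiceL l).map (e.2 :: ·)

lemma choiceL_sound {l : List (ℕ × ℕ)} {picks : List ℕ} (h : picks ∈ choiceL l) :
    (∀ e ∈ l, ∃ a ∈ picks, a = e.1 ∨ a = e.2) ∧
      (∀ a ∈ picks, ∃ e ∈ l, a = e.1 ∨ a = e.2) := by
  induction l generalizing picks with
  | nil =>
      rw [choiceL, List.mem_singleton] at h
      subst h
      exact ⟨fun e he => absurd he (List.not_mem_nil (a := e)), fun a ha => absurd ha (List.not_mem_nil (a := a))⟩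
  | cons e l ih =>
      rw [choiceL, List.mem_append, List.mem_map, List.mem_map] at h
      have key : ∀ (x : ℕ) (p' : List ℕ), p' ∈ choiceL l → picks = x :: p' →
          (x = e.1 ∨ x = e.2) →
          (∀ e' ∈ e :: l, ∃ a ∈ picks, a = e'.1 ∨ a = e'.2) ∧
            (∀ a ∈ picks, ∃ e' ∈ e :: l, a = e'.1 ∨ a = e'.2) := by
        rintro x p' hp' rfl hx
        obtain ⟨hcov, hsupp⟩ := ih hp'
        constructor
        · intro e' he'
          rcases List.mem_cons.1 he' with rfl | he'
          · exact ⟨x, List.mem_cons_self, hx⟩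
          · obtain ⟨a, ha, hor⟩ := hcov e' he'
            exact ⟨a, List.mem_cons_of_mem _ ha, hor⟩
        · intro a ha
          rcases List.mem_cons.1 ha with rfl | ha
          · exact ⟨e, List.mem_cons_self, hx⟩
          · obtain ⟨e', he', hor⟩ := hsupp a ha
            exact ⟨e', List.mem_cons_of_mem _ he', hor⟩
      rcases h with ⟨p', hp', heq⟩ | ⟨p', hp', heq⟩
      · exact key e.1 p' hp' heq.symm (Or.inl rfl)
      · exact key e.2 p' hp' heq.symm (Or.inr rfl)

lemma choiceL_complete {l : List (ℕ × ℕ)} {S : Finset ℕ}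
    (h : ∀ e ∈ l, e.1 ∈ S ∨ e.2 ∈ S) :
    ∃ picks ∈ choiceL l, ∀ a ∈ picks, a ∈ S := by
  induction l with
  | nil => exact ⟨[], List.mem_singleton.2 rfl, fun a ha => absurd ha (List.not_mem_nil (a := a))⟩
  | cons e l ih =>
      obtain ⟨picks, hmem, hsub⟩ := ih (fun e' he' => h e' (List.mem_cons_of_mem _ he'))
      rcases h e (List.mem_cons_self) with h1 | h2
      · refine ⟨e.1 :: picks, ?_, ?_⟩
        · rw [choiceL, List.mem_append]
          exact Or.inl (List.mem_map.2 ⟨picks, hmem, rfl⟩)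
        · intro a ha
          rcases List.mem_cons.1 ha with rfl | ha
          · exact h1
          · exact hsub a ha
      · refine ⟨e.2 :: picks, ?_, ?_⟩
        · rw [choiceL, List.mem_append]
          exact Or.inr (List.mem_map.2 ⟨picks, hmem, rfl⟩)
        · intro a ha
          rcases List.mem_cons.1 ha with rfl | ha
          · exact h2
          · exact hsub a ha

def vcB (es : List (ℕ × ℕ)) (k : ℕ) : Bool :=
  anyB (choiceL (nonloopL es)) (fun picks => decide (dcount picks ≤ k))

lemma mem_nonloopL {es : List (ℕ × ℕ)} {e : ℕ × ℕ} :
    e ∈ nonloopL es ↔ e ∈ es ∧ e.1 ≠ e.2 := by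
  rw [nonloopL_eq, List.mem_filter, decide_eq_true_eq]

lemma vcB_iff {es : List (ℕ × ℕ)} {k : ℕ} : vcB es k = true ↔ HasVC (graphOf es) k := by
  rw [vcB, anyB_eq_true]
  constructor
  · rintro ⟨picks, hmem, hle⟩
    rw [decide_eq_true_eq, dcount_eq] at hle
    obtain ⟨hcov, hsupp⟩ := choiceL_sound hmem
    refine ⟨picks.toFinset, ?_, hle, ?_⟩
    · intro a ha
      rw [List.mem_toFinset] at ha
      obtain ⟨e, he, hor⟩ := hsupp a ha
      obtain ⟨hees, _⟩ := mem_nonloopL.1 he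
      rcases hor with rfl | rfl
      · exact mem_graphOf_V_left hees
      · exact mem_graphOf_V_right hees
    · intro e' he'
      obtain ⟨y, hy, hne, rfl⟩ := mem_graphOf_E.1 he'
      obtain ⟨a, ha, hor⟩ := hcov y (mem_nonloopL.2 ⟨hy, hne⟩)
      refine ⟨a, List.mem_toFinset.2 ha, ?_⟩
      rw [Sym2.mem_iff]
      rcases hor with rfl | rfl
      · exact Or.inl rfl
      · exact Or.inr rfl
  · rintro ⟨S, hSV, hSk, hcov⟩
    have h : ∀ e ∈ nonloopL es, e.1 ∈ S ∨ e.2 ∈ S := by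
      intro e he
      obtain ⟨hees, hne⟩ := mem_nonloopL.1 he
      obtain ⟨a, haS, hae⟩ := hcov s(e.1, e.2) (mem_graphOf_E.2 ⟨e, hees, hne, rfl⟩)
      rw [Sym2.mem_iff] at hae
      rcases hae with rfl | rfl
      · exact Or.inl haS
      · exact Or.inr haS
    obtain ⟨picks, hmem, hsub⟩ := choiceL_complete h
    refine ⟨picks, hmem, ?_⟩
    rw [decide_eq_true_eq, dcount_eq]
    calc picks.toFinset.card ≤ S.card :=
          Finset.card_le_card (fun a ha => hsub a (List.mem_toFinset.1 ha))
      _ ≤ k := hSk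

def allPairsL (X : ℕ) : List (ℕ × ℕ) :=
  (List.range X).flatMap (fun a => (List.range X).map (fun b => (a, b)))

lemma mem_allPairsL {X : ℕ} {e : ℕ × ℕ} (h1 : e.1 < X) (h2 : e.2 < X) :
    e ∈ allPairsL X := by
  rw [allPairsL, List.mem_flatMap]
  exact ⟨e.1, List.mem_range.2 h1, List.mem_map.2 ⟨e.2, List.mem_range.2 h2, rfl⟩⟩

def allListsL (X : ℕ) : ℕ → List (List (ℕ × ℕ))
  | 0 => [[]]
  | L + 1 => allListsL X L ++ (allPairsL X).flatMap (fun p => (allListsL X L).map (p :: ·))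

lemma mem_allListsL {X L : ℕ} {es : List (ℕ × ℕ)}
    (hb : ∀ e ∈ es, e.1 < X ∧ e.2 < X) (hl : es.length ≤ L) : es ∈ allListsL X L := by
  induction L generalizing es with
  | zero =>
      rw [Nat.le_zero, List.length_eq_zero_iff] at hl
      subst hl
      exact List.mem_singleton.2 rfl
  | succ L ih =>
      cases es with
      | nil =>
          rw [allListsL, List.mem_append]
          exact Or.inl (ih (fun e he => absurd he (List.not_mem_nil (a := e))) (Nat.zero_le L))
      | cons e es =>
          rw [allListsL, List.mem_append]
          right
          rw [List.mem_flatMap]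
          obtain ⟨h1, h2⟩ := hb e (List.mem_cons_self)
          refine ⟨e, mem_allPairsL h1 h2, List.mem_map.2 ⟨es, ?_, rfl⟩⟩
          exact ih (fun e' he' => hb e' (List.mem_cons_of_mem _ he'))
            (Nat.le_of_succ_le_succ hl)

def nqB (M : NFAEnc) : ℕ := dcount (M.1.map (fun tr => tr.2.2))

lemma nqB_eq (M : NFAEnc) : nqB M = (targets M.1).card := by
  rw [nqB, dcount_eq, targets]

def xbB (M : NFAEnc) : ℕ := nqB M ^ (2 * nqB M)

lemma xbB_eq (M : NFAEnc) : xbB M = XB M.1 := by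
  rw [xbB, XB, nqB_eq]

def decider (M : NFAEnc) : Bool :=
  anyB (List.range (2 * nqB M + 1)) (fun k =>
    anyB (allListsL (xbB M) (nqB M)) (fun es => accB M (encode k es) && vcB es k))

lemma decider_iff (M : NFAEnc) :
    decider M = true ↔
      (∃ w : Word, w ∈ encLang M ∧ w ∈ Enc ∧
        ∃ (G : EncGraph) (k : ℕ), decodesTo w G k ∧ HasVC G k) := by
  rw [pred_iff, bounded_iff, decider]
  rw [anyB_eq_true]
  constructor
  · rintro ⟨k, hk, hin⟩
    rw [anyB_eq_true] at hin
    obtain ⟨es, _, hes⟩ := hin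
    rw [Bool.and_eq_true, accB_iff, vcB_iff] at hes
    -- we get an unbounded witness; rebuild the bounded form via bounded_iff itself
    exact (bounded_iff M).1 ⟨k, es, hes.1, hes.2⟩
  · rintro ⟨k, hk, es, hlen, hsmall, hL, hVC⟩
    refine ⟨k, List.mem_range.2 (by rw [nqB_eq]; omega), ?_⟩
    rw [anyB_eq_true]
    refine ⟨es, ?_, ?_⟩
    · rw [xbB_eq, nqB_eq]
      exact mem_allListsL hsmall hlen
    · rw [Bool.and_eq_true, accB_iff, vcB_iff]
      exact ⟨hL, hVC⟩
/-! ### Primitive recursiveness of the decider -/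

section PrimrecLemmas

open Primrec

lemma primrec_anyB {α β : Type} [Primcodable α] [Primcodable β]
    {f : α → List β} {p : α → β → Bool} (hf : Primrec f) (hp : Primrec₂ p) :
    Primrec fun a => anyB (f a) (p a) := by
  have h : Primrec₂ fun (a : α) (x : β × Bool) => p a x.1 || x.2 :=
    (dom_bool₂ (· || ·)).comp (hp.comp fst (fst.comp snd)) (snd.comp snd)
  exact (list_foldr hf (const false) h).of_eq fun a => rfl

lemma primrec_memB : Primrec₂ memB := by
  have hp : Primrec₂ fun (x : ℕ × List ℕ) (b : ℕ) => b == x.1 :=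
    Primrec.beq.comp snd (fst.comp fst)
  exact (primrec_anyB (f := fun x : ℕ × List ℕ => x.2) snd hp).to₂.of_eq fun a l => rfl

lemma primrec_pow : Primrec₂ (fun a b : ℕ => a ^ b) := by
  have h : Primrec fun p : ℕ × ℕ =>
      Nat.rec (motive := fun _ => ℕ) 1 (fun _ IH => IH * p.1) p.2 :=
    nat_rec' snd (const 1) (nat_mul.comp (snd.comp snd) (fst.comp fst)).to₂
  refine h.to₂.of_eq fun a b => ?_
  induction b with
  | zero => rfl
  | succ b ih => simpa [pow_succ] using congrArg (· * a) ih

lemma primrec_dlist : Primrec dlist := by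
  have h : Primrec₂ fun (_ : List ℕ) (x : ℕ × List ℕ) =>
      bif memB x.1 x.2 then x.2 else x.1 :: x.2 :=
    (Primrec.cond (primrec_memB.comp (fst.comp snd) (snd.comp snd))
      (snd.comp snd) (list_cons.comp (fst.comp snd) (snd.comp snd))).to₂
  refine (list_foldr .id (const []) h).of_eq fun l => ?_
  show List.foldr (fun b s => bif memB b s then s else b :: s) [] l = dlist l
  rw [dlist]
  congr 1
  funext a r
  by_cases hb : memB a r <;> simp [hb]

lemma primrec_dcount : Primrec dcount := list_length.comp primrec_dlist

lemma primrec_nonloopL : Primrec nonloopL := by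
  have h : Primrec₂ fun (_ : List (ℕ × ℕ)) (x : (ℕ × ℕ) × List (ℕ × ℕ)) =>
      bif x.1.1 == x.1.2 then x.2 else x.1 :: x.2 :=
    (Primrec.cond (Primrec.beq.comp (fst.comp (fst.comp snd)) (snd.comp (fst.comp snd)))
      (snd.comp snd) (list_cons.comp (fst.comp snd) (snd.comp snd))).to₂
  refine (list_foldr .id (const []) h).of_eq fun es => ?_
  show List.foldr (fun b s => bif b.1 == b.2 then s else b :: s) [] es = nonloopL es
  rw [nonloopL]
  congr 1
  funext e r
  by_cases hb : e.1 == e.2 <;> simp [hb]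

lemma primrec_choiceL : Primrec choiceL := by
  have h : Primrec₂ fun (_ : List (ℕ × ℕ)) (x : (ℕ × ℕ) × List (ℕ × ℕ) × List (List ℕ)) =>
      (x.2.2.map (x.1.1 :: ·)) ++ (x.2.2.map (x.1.2 :: ·)) := by
    have h1 : Primrec₂ fun (y : List (ℕ × ℕ) × ((ℕ × ℕ) × List (ℕ × ℕ) × List (List ℕ)))
        (picks : List ℕ) => y.2.1.1 :: picks :=
      list_cons.comp (fst.comp (fst.comp (snd.comp fst))) snd
    have h2 : Primrec₂ fun (y : List (ℕ × ℕ) × ((ℕ × ℕ) × List (ℕ × ℕ) × List (List ℕ)))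
        (picks : List ℕ) => y.2.1.2 :: picks :=
      list_cons.comp (snd.comp (fst.comp (snd.comp fst))) snd
    exact (list_append.comp
      (list_map ((snd.comp (snd.comp snd)).comp Primrec.id) h1)
      (list_map ((snd.comp (snd.comp snd)).comp Primrec.id) h2)).to₂
  refine (list_rec .id (const [[]]) h).of_eq fun l => ?_
  induction l with
  | nil => rfl
  | cons e l ih => rw [choiceL, ← ih]; rfl

end PrimrecLemmas
section PrimrecLemmas2

open Primrec

lemma primrec_replicate (c : Letter) : Primrec (fun n => List.replicate n c) := by
  refine (list_map list_range ((Primrec.const c).comp₂ Primrec₂.right)).of_eq fun n => ?_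
  rw [show (fun (_ : ℕ) => c) = Function.const ℕ c from rfl, List.map_const, List.length_range]

lemma primrec_thresholdTok : Primrec thresholdTok :=
  list_cons.comp (const Letter.tri)
    (list_append.comp (primrec_replicate Letter.one) (const [Letter.dollar]))

lemma primrec_leftTok : Primrec leftTok :=
  list_cons.comp (const Letter.tri)
    (list_append.comp (primrec_replicate Letter.lett) (const [Letter.hash]))

lemma primrec_rightTok : Primrec rightTok :=
  list_cons.comp (const Letter.tri)
    (list_append.comp (primrec_replicate Letter.lett) (const [Letter.dollar]))

lemma primrec_etok : Primrec etok :=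
  list_append.comp (primrec_leftTok.comp fst) (primrec_rightTok.comp snd)

lemma primrec_encode : Primrec₂ encode := by
  have h : Primrec fun a : ℕ × List (ℕ × ℕ) => thresholdTok a.1 ++ (a.2.map etok).flatten :=
    list_append.comp (primrec_thresholdTok.comp fst)
      (list_flatten.comp (list_map snd ((primrec_etok.comp snd).to₂)))
  exact h.to₂.of_eq fun k es => (encode_eq k es).symm

lemma primrec_allPairsL : Primrec allPairsL := by
  have hinner : Primrec₂ fun (x : ℕ × ℕ) (b : ℕ) => (x.2, b) :=
    Primrec.pair (snd.comp fst) snd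
  exact list_flatMap list_range (list_map (list_range.comp fst) hinner)

lemma primrec_allListsL : Primrec₂ allListsL := by
  have hcons : Primrec₂ fun (y : (((ℕ × ℕ) × ℕ × List (List (ℕ × ℕ))) × ℕ × ℕ))
      (es : List (ℕ × ℕ)) => y.2 :: es := list_cons.comp (snd.comp fst) snd
  have hg : Primrec₂ fun (x : (ℕ × ℕ) × ℕ × List (List (ℕ × ℕ))) (p : ℕ × ℕ) =>
      x.2.2.map (p :: ·) := list_map ((snd.comp snd).comp fst) hcons
  have h : Primrec₂ fun (a : ℕ × ℕ) (q : ℕ × List (List (ℕ × ℕ))) =>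
      q.2 ++ (allPairsL a.1).flatMap (fun p => q.2.map (p :: ·)) :=
    (list_append.comp (snd.comp snd)
      (list_flatMap (primrec_allPairsL.comp (fst.comp fst)) hg)).to₂
  have hrec := nat_rec' (f := fun a : ℕ × ℕ => a.2) snd (const [[]]) h
  refine hrec.to₂.of_eq fun X L => ?_
  induction L with
  | zero => rfl
  | succ L ih => rw [allListsL, ← ih]

end PrimrecLemmas2
section PrimrecLemmas3

open Primrec

lemma primrec_stepL : Primrec₂ fun (T : List (ℕ × Letter × ℕ)) (x : List ℕ × Letter) =>
    stepL T x.1 x.2 := by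
  have hbeq : Primrec fun y : (List (ℕ × Letter × ℕ) × (List ℕ × Letter)) ×
      ((ℕ × Letter × ℕ) × List ℕ) => y.2.1.2.1 == y.1.2.2 :=
    Primrec.beq.comp (fst.comp (snd.comp (fst.comp snd))) (snd.comp (snd.comp fst))
  have hmem : Primrec fun y : (List (ℕ × Letter × ℕ) × (List ℕ × Letter)) ×
      ((ℕ × Letter × ℕ) × List ℕ) => memB y.2.1.1 y.1.2.1 :=
    primrec_memB.comp (fst.comp (fst.comp snd)) (fst.comp (snd.comp fst))
  have hand := (dom_bool₂ (· && ·)).comp hbeq hmem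
  have h : Primrec₂ fun (a : List (ℕ × Letter × ℕ) × (List ℕ × Letter))
      (z : (ℕ × Letter × ℕ) × List ℕ) =>
      bif z.1.2.1 == a.2.2 && memB z.1.1 a.2.1 then z.1.2.2 :: z.2 else z.2 :=
    (Primrec.cond hand
      (list_cons.comp (snd.comp (snd.comp (fst.comp snd))) (snd.comp snd))
      (snd.comp snd)).to₂
  have hfold := list_foldr (f := fun a : List (ℕ × Letter × ℕ) × (List ℕ × Letter) => a.1)
    fst (const []) h
  refine hfold.to₂.of_eq fun T x => ?_
  show List.foldr _ [] T = stepL T x.1 x.2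
  rw [stepL]
  congr 1
  funext tr r
  by_cases hb : tr.2.1 == x.2 && memB tr.1 x.1 <;> simp [hb]

lemma primrec_accB : Primrec₂ accB := by
  have hstep : Primrec₂ fun (a : NFAEnc × Word) (x : List ℕ × Letter) =>
      stepL a.1.1 x.1 x.2 :=
    (primrec_stepL.comp (fst.comp (fst.comp fst)) snd).to₂
  have hfold : Primrec fun a : NFAEnc × Word =>
      a.2.foldl (fun s b => stepL a.1.1 (s, b).1 (s, b).2) [a.1.2.1] :=
    list_foldl snd (list_cons.comp (fst.comp (snd.comp fst)) (const [])) hstep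
  have hp : Primrec₂ fun (a : NFAEnc × Word) (qf : ℕ) =>
      memB qf (a.2.foldl (fun s b => stepL a.1.1 (s, b).1 (s, b).2) [a.1.2.1]) :=
    (primrec_memB.comp snd (hfold.comp fst)).to₂
  have h := primrec_anyB (f := fun a : NFAEnc × Word => a.1.2.2)
    (snd.comp (snd.comp fst)) hp
  exact h.to₂.of_eq fun M w => rfl

lemma primrec_vcB : Primrec₂ vcB := by
  have hp : Primrec₂ fun (a : List (ℕ × ℕ) × ℕ) (picks : List ℕ) =>
      decide (dcount picks ≤ a.2) :=
    ((nat_le.comp (primrec_dcount.comp snd) (snd.comp fst)).decide :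
      Primrec fun y : (List (ℕ × ℕ) × ℕ) × List ℕ => decide (dcount y.2 ≤ y.1.2)).to₂
  have h := primrec_anyB (f := fun a : List (ℕ × ℕ) × ℕ => choiceL (nonloopL a.1))
    (primrec_choiceL.comp (primrec_nonloopL.comp fst)) hp
  exact h.to₂.of_eq fun es k => rfl

lemma primrec_nqB : Primrec nqB :=
  primrec_dcount.comp (list_map fst
    ((snd.comp (snd.comp snd) : Primrec fun y : NFAEnc × (ℕ × Letter × ℕ) => y.2.2.2).to₂))

lemma primrec_xbB : Primrec xbB :=
  primrec_pow.comp primrec_nqB (nat_mul.comp (const 2) primrec_nqB)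

lemma primrec_decider : Primrec decider := by
  have hacc : Primrec fun z : (NFAEnc × ℕ) × List (ℕ × ℕ) =>
      accB z.1.1 (encode z.1.2 z.2) :=
    primrec_accB.comp (fst.comp fst) (primrec_encode.comp (snd.comp fst) snd)
  have hvc : Primrec fun z : (NFAEnc × ℕ) × List (ℕ × ℕ) => vcB z.2 z.1.2 :=
    primrec_vcB.comp snd (snd.comp fst)
  have hq : Primrec₂ fun (y : NFAEnc × ℕ) (es : List (ℕ × ℕ)) =>
      accB y.1 (encode y.2 es) && vcB es y.2 :=
    ((dom_bool₂ (· && ·)).comp hacc hvc).to₂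
  have hinner : Primrec₂ fun (M : NFAEnc) (k : ℕ) =>
      anyB (allListsL (xbB M) (nqB M)) (fun es => accB M (encode k es) && vcB es k) := by
    have h := primrec_anyB (f := fun y : NFAEnc × ℕ => allListsL (xbB y.1) (nqB y.1))
      (primrec_allListsL.comp (primrec_xbB.comp fst) (primrec_nqB.comp fst)) hq
    exact h.to₂.of_eq fun M k => rfl
  have hrange : Primrec fun M : NFAEnc => List.range (2 * nqB M + 1) :=
    list_range.comp (nat_add.comp (nat_mul.comp (const 2) primrec_nqB) (const 1))
  exact (primrec_anyB hrange hinner).of_eq fun M => rfl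

end PrimrecLemmas3

/-- `int_Reg(Vertex Cover)` is decidable: the predicate on (finite
encodings of) NFAs `M` over `Σ`, asserting that some `w ∈ L(M) ∩ Enc` decodes to a
positive Vertex Cover instance, is computable. -/
theorem stmt10 :
    ComputablePred (fun M : NFAEnc =>
      ∃ w : Word, w ∈ encLang M ∧ w ∈ Enc ∧
        ∃ (G : EncGraph) (k : ℕ), decodesTo w G k ∧ HasVC G k) := by
  exact ComputablePred.computable_iff.2
    ⟨decider, primrec_decider.to_comp, funext fun M => propext (decider_iff M).symm⟩
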